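/- Suppose 0 < b < 1, q > 0, and Ψ(b,q) ≥ 0, where Ψ(b,q) = (4/3)·(b/(1−b))·((b+q+1)/(b+q+2)) − 2ψ(ζ(b,q)) − ψ(ζ(b,q))², ζ(b,q) = (2/9)·b²/((b+1)(b+2))·(b+q+3)(b+q+4)/(b+q+2)², and ψ(ζ) = ζ^{1/3}((1+√(1−ζ))^{1/3} + (1−√(1−ζ))^{1/3}). Then for all w ≥ 0, M(b−1, b+q+1, w)/M(b, b+q+1, w) ≥ −(1−b)/(b+2). -/

import Mathlib

/-- Kummer's confluent hypergeometric function `M(a, c, w)`. -/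
noncomputable def kummerM (a c w : ℝ) : ℝ :=
  ∑' i : ℕ, ((ascPochhammer ℝ i).eval a / (ascPochhammer ℝ i).eval c) * w ^ i / (Nat.factorial i)

/-- The Beta function as an integral. -/
noncomputable def betaFn (x y : ℝ) : ℝ :=
  ∫ t in (0:ℝ)..1, t ^ (x - 1) * (1 - t) ^ (y - 1)

noncomputable def psi (z : ℝ) : ℝ :=
  z ^ ((1:ℝ)/3) * ((1 + Real.sqrt (1 - z)) ^ ((1:ℝ)/3) + (1 - Real.sqrt (1 - z)) ^ ((1:ℝ)/3))

noncomputable def zeta (b q : ℝ) : ℝ :=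
  (2/9) * (b^2 / ((b+1)*(b+2))) * ((b+q+3)*(b+q+4) / (b+q+2)^2)

noncomputable def Psi (b q : ℝ) : ℝ :=
  (4/3) * (b / (1 - b)) * ((b+q+1) / (b+q+2)) - 2 * psi (zeta b q) - (psi (zeta b q))^2

/- ## Auxiliary lemmas -/

lemma psi_cubic {z : ℝ} (hz0 : 0 < z) (hz1 : z ≤ 1) :
    psi z ^ 3 = 3 * z * psi z + 2 * z ∧ 0 < psi z := by
  set s := Real.sqrt (1 - z) with hs
  have hs0 : 0 ≤ s := Real.sqrt_nonneg _
  have hs2 : s ^ 2 = 1 - z := Real.sq_sqrt (by linarith)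
  have hs1 : s ≤ 1 := by nlinarith
  set u := (1 + s) ^ ((1:ℝ)/3) with hu
  set v := (1 - s) ^ ((1:ℝ)/3) with hv
  have hu3 : u ^ 3 = 1 + s := by
    rw [hu, ← Real.rpow_natCast ((1+s) ^ ((1:ℝ)/3)) 3, ← Real.rpow_mul (by linarith)]
    norm_num
  have hv3 : v ^ 3 = 1 - s := by
    rw [hv, ← Real.rpow_natCast ((1-s) ^ ((1:ℝ)/3)) 3, ← Real.rpow_mul (by linarith)]
    norm_num
  have huv : u * v = z ^ ((1:ℝ)/3) := by
    rw [hu, hv, ← Real.mul_rpow (by linarith) (by linarith)]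
    congr 1
    nlinarith
  have hz3 : (z ^ ((1:ℝ)/3)) ^ 3 = z := by
    rw [← Real.rpow_natCast (z ^ ((1:ℝ)/3)) 3, ← Real.rpow_mul hz0.le]
    norm_num
  have hupos : 0 < u := Real.rpow_pos_of_pos (by linarith) _
  have hvnn : 0 ≤ v := Real.rpow_nonneg (by linarith) _
  have hznn : 0 < z ^ ((1:ℝ)/3) := Real.rpow_pos_of_pos hz0 _
  constructor
  · have : psi z ^ 3 = (z ^ ((1:ℝ)/3)) ^ 3 * (u ^ 3 + v ^ 3 + 3 * (u * v) * (u + v)) := by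
      rw [psi]; ring
    rw [this, hz3, hu3, hv3, huv]
    rw [psi]
    ring
  · rw [psi]
    positivity

lemma Qfact {x p : ℝ} (hx : 0 ≤ x) (hp : 0 < p) :
    8 * p^3 * x + 6 * p^3 * x^2 ≤ (3*p+2) * x^4 + 6 * p^4 + 3 * p^5 := by
  have key : (3*p+2) * x^4 - 6*p^3*x^2 - 8*p^3*x + 6*p^4 + 3*p^5
      = (x - p)^2 * ((3*p+2)*x^2 + 2*p*(3*p+2)*x + 3*p^2*(p+2)) := by ring
  have h2 : 0 ≤ (x - p)^2 * ((3*p+2)*x^2 + 2*p*(3*p+2)*x + 3*p^2*(p+2)) := by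
    apply mul_nonneg (sq_nonneg _)
    have := mul_nonneg hx hx
    nlinarith [mul_nonneg (mul_nonneg hp.le hp.le) hp.le, mul_nonneg hp.le hx,
      mul_nonneg (mul_nonneg hp.le hp.le) hx, mul_nonneg hx hx,
      mul_nonneg hp.le (mul_nonneg hx hx)]
  linarith [key ▸ h2]

lemma quartic_bound (b c w p Z : ℝ) (hb0 : 0 < b) (hb1 : b < 1) (hc : 1 < c)
    (hw : 0 ≤ w) (hp : 0 < p)
    (hZ : Z = (2/9) * (b^2 / ((b+1)*(b+2))) * ((c+2)*(c+3) / (c+1)^2))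
    (hcubic : p ^ 3 = 3 * Z * p + 2 * Z)
    (hPsi : 2*p + p^2 ≤ (4/3) * (b/(1-b)) * (c/(c+1))) :
    0 ≤ 3 - 2*(1-b)*w/c - b*(1-b)*w^2/(2*c*(c+1))
        + (1-b)*b*(b+1)*(b+2)*w^4/(24*c*(c+1)*(c+2)*(c+3)) := by
  have hb2 : (0:ℝ) < b + 1 := by linarith
  have hb3 : (0:ℝ) < b + 2 := by linarith
  have hc0 : (0:ℝ) < c := by linarith
  have hc1 : (0:ℝ) < c + 1 := by linarith
  have hc2 : (0:ℝ) < c + 2 := by linarith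
  have hc3 : (0:ℝ) < c + 3 := by linarith
  have h1b : (0:ℝ) < 1 - b := by linarith
  have hZ0 : 0 < Z := by rw [hZ]; positivity
  set x : ℝ := b * w / (3 * (c+1)) with hxdef
  have hx : 0 ≤ x := by positivity
  have h3p : (0:ℝ) < 3*p + 2 := by linarith
  have hZp : Z * (3*p + 2) = p^3 := by linarith
  have step1 : Z * (8*x + 6*x^2) ≤ x^4 + Z * (6*p + 3*p^2) := by
    have hmul : (3*p+2) * (Z * (8*x + 6*x^2)) ≤ (3*p+2) * (x^4 + Z * (6*p + 3*p^2)) := by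
      have := Qfact hx hp
      nlinarith [this, hZp]
    exact le_of_mul_le_mul_left hmul h3p
  have step2 : Z * (6*p + 3*p^2) ≤ Z * (4*b*c/((1-b)*(c+1))) := by
    apply mul_le_mul_of_nonneg_left _ hZ0.le
    have he : (4:ℝ)*b*c/((1-b)*(c+1)) = 3 * ((4/3) * (b/(1-b)) * (c/(c+1))) := by
      field_simp
    rw [he]
    linarith
  have step3 : Z * (8*x + 6*x^2) - x^4 ≤ Z * (4*b*c/((1-b)*(c+1))) := by
    linarith
  have hκ : (0:ℝ) < 3*(1-b)*(c+1)/(4*b*c*Z) := by positivity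
  have hmul := mul_le_mul_of_nonneg_left step3 hκ.le
  have eqR : 3*(1-b)*(c+1)/(4*b*c*Z) * (Z * (4*b*c/((1-b)*(c+1)))) = 3 := by
    field_simp
  have eqL : 3*(1-b)*(c+1)/(4*b*c*Z) * (Z * (8*x + 6*x^2) - x^4)
      = 2*(1-b)*w/c + b*(1-b)*w^2/(2*c*(c+1))
        - (1-b)*b*(b+1)*(b+2)*w^4/(24*c*(c+1)*(c+2)*(c+3)) := by
    rw [hxdef, hZ]
    field_simp
    ring
  rw [eqR, eqL] at hmul
  linarith

lemma poch_succ_left (a : ℝ) (n : ℕ) :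
    (ascPochhammer ℝ (n+1)).eval a = a * (ascPochhammer ℝ n).eval (a + 1) := by
  rw [ascPochhammer_succ_left]
  simp [Polynomial.eval_comp]

lemma poch_abs_le {a c : ℝ} (ha : -1 ≤ a) (hac : a ≤ c) (hc : 1 ≤ c) (n : ℕ) :
    |(ascPochhammer ℝ n).eval a| ≤ (ascPochhammer ℝ n).eval c := by
  induction n with
  | zero => simp
  | succ n ih =>
    rw [ascPochhammer_succ_eval, ascPochhammer_succ_eval, abs_mul]
    have hcpos := ascPochhammer_pos n c (by linarith : (0:ℝ) < c)
    apply mul_le_mul ih _ (abs_nonneg _) hcpos.le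
    rw [abs_le]
    constructor <;> nlinarith [Nat.cast_nonneg (α := ℝ) n]

lemma kummer_term_bound {a c w : ℝ} (ha : -1 ≤ a) (hac : a ≤ c) (hc : 1 ≤ c) (hw : 0 ≤ w) (i : ℕ) :
    |(ascPochhammer ℝ i).eval a / (ascPochhammer ℝ i).eval c * w ^ i / (Nat.factorial i)|
      ≤ w ^ i / (Nat.factorial i) := by
  have hcpos := ascPochhammer_pos i c (by linarith : (0:ℝ) < c)
  have hfac : (0:ℝ) < (Nat.factorial i : ℝ) := by positivity
  calc |(ascPochhammer ℝ i).eval a / (ascPochhammer ℝ i).eval c * w ^ i / (Nat.factorial i)|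
      = |(ascPochhammer ℝ i).eval a| / (ascPochhammer ℝ i).eval c * w ^ i / (Nat.factorial i) := by
        rw [abs_div, abs_mul, abs_div, abs_of_pos hcpos, abs_of_nonneg (pow_nonneg hw i),
          Nat.abs_cast]
    _ ≤ 1 * w ^ i / (Nat.factorial i) := by
        gcongr
        exact (div_le_one hcpos).mpr (poch_abs_le ha hac hc i)
    _ = w ^ i / (Nat.factorial i) := by ring

lemma kummer_summable {a c w : ℝ} (ha : -1 ≤ a) (hac : a ≤ c) (hc : 1 ≤ c) (hw : 0 ≤ w) :
    Summable (fun i : ℕ => (ascPochhammer ℝ i).eval a / (ascPochhammer ℝ i).eval c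
      * w ^ i / (Nat.factorial i)) := by
  apply Summable.of_norm_bounded (Real.summable_pow_div_factorial w)
  intro i
  rw [Real.norm_eq_abs]
  exact kummer_term_bound ha hac hc hw i

lemma kummer_pos {a c w : ℝ} (ha : 0 < a) (hac : a ≤ c) (hc : 1 ≤ c) (hw : 0 ≤ w) :
    0 < kummerM a c w := by
  rw [kummerM]
  apply Summable.tsum_pos (kummer_summable (by linarith) hac hc hw) _ 0
  · simp
  · intro i
    have h1 := ascPochhammer_pos i a ha
    have h2 := ascPochhammer_pos i c (by linarith : (0:ℝ) < c)
    positivity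

lemma key_coeff (b : ℝ) (n : ℕ) :
    (b+2) * (ascPochhammer ℝ (n+1)).eval (b-1) + (1-b) * (ascPochhammer ℝ (n+1)).eval b
      = (1-b) * ((n:ℝ) - 2) * (ascPochhammer ℝ n).eval b := by
  rw [poch_succ_left, ascPochhammer_succ_eval]
  have hb : b - 1 + 1 = b := by ring
  rw [hb]
  ring

theorem ratio_lower_bound (b q : ℝ) (hb0 : 0 < b) (hb1 : b < 1) (hq : 0 < q)
    (hΨ : 0 ≤ Psi b q) :
    ∀ w : ℝ, 0 ≤ w →
      kummerM (b - 1) (b + q + 1) w / kummerM b (b + q + 1) w ≥ -(1 - b) / (b + 2) := by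
  intro w hw
  set c : ℝ := b + q + 1 with hcdef
  have hc : 1 < c := by rw [hcdef]; linarith
  have hc0 : (0:ℝ) < c := by linarith
  have hc1 : (0:ℝ) < c + 1 := by linarith
  have hc2 : (0:ℝ) < c + 2 := by linarith
  have hc3 : (0:ℝ) < c + 3 := by linarith
  have hb2 : (0:ℝ) < b + 2 := by linarith
  have h1b : (0:ℝ) < 1 - b := by linarith
  -- zeta facts
  have hzeta0 : 0 < zeta b q := by
    rw [zeta]
    have h1 : (0:ℝ) < b + q + 2 := by linarith
    have h2 : (0:ℝ) < b + q + 3 := by linarith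
    have h3 : (0:ℝ) < b + q + 4 := by linarith
    positivity
  have hzeta1 : zeta b q ≤ 1 := by
    rw [zeta]
    have h1 : b^2/((b+1)*(b+2)) ≤ 1 := by
      rw [div_le_one (by positivity)]
      nlinarith
    have h2 : (b+q+3)*(b+q+4)/(b+q+2)^2 ≤ 3 := by
      rw [div_le_iff₀ (by positivity)]
      nlinarith
    have h1' : (0:ℝ) ≤ b^2/((b+1)*(b+2)) := by positivity
    have h2' : (0:ℝ) ≤ (b+q+3)*(b+q+4)/(b+q+2)^2 := by positivity
    nlinarith [mul_le_mul h1 h2 h2' (by norm_num : (0:ℝ) ≤ 1)]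
  obtain ⟨hcubic, hppos⟩ := psi_cubic hzeta0 hzeta1
  set p : ℝ := psi (zeta b q) with hpdef
  -- hypothesis unfolded
  have hE1 : b + q + 2 = c + 1 := by rw [hcdef]; ring
  have hE2 : b + q + 3 = c + 2 := by rw [hcdef]; ring
  have hE3 : b + q + 4 = c + 3 := by rw [hcdef]; ring
  have hPsi' : 2*p + p^2 ≤ (4/3) * (b/(1-b)) * (c/(c+1)) := by
    have h := hΨ
    rw [Psi] at h
    rw [hE1, ← hcdef] at h
    linarith
  have hZeq : zeta b q = (2/9) * (b^2 / ((b+1)*(b+2))) * ((c+2)*(c+3) / (c+1)^2) := by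
    rw [zeta, hE1, hE2, hE3]
  -- the quartic bound
  have hquart := quartic_bound b c w p (zeta b q) hb0 hb1 hc hw hppos hZeq hcubic hPsi'
  -- series manipulations
  have ha1 : (-1:ℝ) ≤ b - 1 := by linarith
  have hac1 : b - 1 ≤ c := by linarith
  have ha2 : (-1:ℝ) ≤ b := by linarith
  have hac2 : b ≤ c := by linarith
  have hsum1 := kummer_summable ha1 hac1 hc.le hw
  have hsum2 := kummer_summable ha2 hac2 hc.le hw
  set t : ℕ → ℝ := fun i =>
    (b+2) * ((ascPochhammer ℝ i).eval (b-1) / (ascPochhammer ℝ i).eval c * w ^ i / (Nat.factorial i))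
    + (1-b) * ((ascPochhammer ℝ i).eval b / (ascPochhammer ℝ i).eval c * w ^ i / (Nat.factorial i))
    with htdef
  have hsumt : Summable t := (hsum1.mul_left (b+2)).add (hsum2.mul_left (1-b))
  have hcomb : (b+2) * kummerM (b-1) c w + (1-b) * kummerM b c w = ∑' i, t i := by
    rw [kummerM, kummerM, ← tsum_mul_left, ← tsum_mul_left,
      ← Summable.tsum_add (hsum1.mul_left (b+2)) (hsum2.mul_left (1-b))]
  -- tail nonneg
  have htail : ∀ i : ℕ, 0 ≤ t (i + 5) := by
    intro i
    have hnum := key_coeff b (i + 4)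
    have hPb := ascPochhammer_pos (i+4) b hb0
    have hPc := ascPochhammer_pos (i+5) c hc0
    have heq : t (i+5) = ((b+2) * (ascPochhammer ℝ (i+4+1)).eval (b-1)
        + (1-b) * (ascPochhammer ℝ (i+4+1)).eval b)
        / (ascPochhammer ℝ (i+5)).eval c * w ^ (i+5) / (Nat.factorial (i+5)) := by
      show t (i+5) = _
      rw [htdef]
      have : i + 4 + 1 = i + 5 := rfl
      rw [this]
      ring
    rw [heq, hnum]
    have hcast : ((i+4 : ℕ) : ℝ) - 2 = (i : ℝ) + 2 := by push_cast; ring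
    rw [hcast]
    have hfac : (0:ℝ) < (Nat.factorial (i+5) : ℝ) := by positivity
    have hi2 : (0:ℝ) ≤ (i:ℝ) + 2 := by positivity
    positivity
  -- split
  have hsplit := hsumt.sum_add_tsum_nat_add 5
  have htailsum : 0 ≤ ∑' i, t (i + 5) := tsum_nonneg htail
  -- head sum evaluation
  have p0 : ∀ x : ℝ, (ascPochhammer ℝ 0).eval x = 1 := by intro x; simp
  have p1 : ∀ x : ℝ, (ascPochhammer ℝ 1).eval x = x := by intro x; simp
  have p2 : ∀ x : ℝ, (ascPochhammer ℝ 2).eval x = x * (x+1) := by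
    intro x
    rw [show (2:ℕ) = 1+1 from rfl, ascPochhammer_succ_eval]
    simp
  have p3 : ∀ x : ℝ, (ascPochhammer ℝ 3).eval x = x * (x+1) * (x+2) := by
    intro x
    rw [show (3:ℕ) = 2+1 from rfl, ascPochhammer_succ_eval, p2]
    norm_num
  have p4 : ∀ x : ℝ, (ascPochhammer ℝ 4).eval x = x * (x+1) * (x+2) * (x+3) := by
    intro x
    rw [show (4:ℕ) = 3+1 from rfl, ascPochhammer_succ_eval, p3]
    norm_num
  have hfac2 : ((Nat.factorial 2 : ℕ) : ℝ) = 2 := by norm_num [Nat.factorial]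
  have hfac3 : ((Nat.factorial 3 : ℕ) : ℝ) = 6 := by norm_num [Nat.factorial]
  have hfac4 : ((Nat.factorial 4 : ℕ) : ℝ) = 24 := by norm_num [Nat.factorial]
  have hc0' : c ≠ 0 := ne_of_gt hc0
  have hc1' : c + 1 ≠ 0 := ne_of_gt hc1
  have hc2' : c + 2 ≠ 0 := ne_of_gt hc2
  have hc3' : c + 3 ≠ 0 := ne_of_gt hc3
  have ht0 : t 0 = 3 := by
    simp only [htdef, p0]
    norm_num
    ring
  have ht1 : t 1 = -(2*(1-b)*w/c) := by
    simp only [htdef, p1]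
    rw [show ((Nat.factorial 1 : ℕ) : ℝ) = 1 by norm_num [Nat.factorial]]
    field_simp
    ring
  have ht2 : t 2 = -(b*(1-b)*w^2/(2*c*(c+1))) := by
    simp only [htdef, p2 (b-1), p2 b, p2 c, hfac2]
    field_simp
    ring
  have ht3 : t 3 = 0 := by
    simp only [htdef, p3 (b-1), p3 b, p3 c, hfac3]
    field_simp
    ring
  have ht4 : t 4 = (1-b)*b*(b+1)*(b+2)*w^4/(24*c*(c+1)*(c+2)*(c+3)) := by
    simp only [htdef, p4 (b-1), p4 b, p4 c, hfac4]
    field_simp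
    ring
  have hhead : ∑ i ∈ Finset.range 5, t i
      = 3 - 2*(1-b)*w/c - b*(1-b)*w^2/(2*c*(c+1))
        + (1-b)*b*(b+1)*(b+2)*w^4/(24*c*(c+1)*(c+2)*(c+3)) := by
    rw [Finset.sum_range_succ, Finset.sum_range_succ, Finset.sum_range_succ,
      Finset.sum_range_succ, Finset.sum_range_one, ht0, ht1, ht2, ht3, ht4]
    ring
  have hkey : 0 ≤ (b+2) * kummerM (b-1) c w + (1-b) * kummerM b c w := by
    rw [hcomb, ← hsplit, hhead]
    linarith
  -- conclude
  have hMpos : 0 < kummerM b c w := kummer_pos hb0 hac2 hc.le hw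
  rw [ge_iff_le, div_le_div_iff₀ hb2 hMpos]
  linarith
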